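/- Let n ≥ 1, let m(x,y) = x^p y^q ∈ 𝒪_n be an ordered monomial, and let σ ∈ B_n be its signed index permutation. Then the sequence (p_i − f_i(σ^{-1}))_{i=1}^{n} is a weakly decreasing sequence of non-negative even integers. -/

import Mathlib

open MvPolynomial

/-- The hyperoctahedral group `Bₙ`, realized as the subgroup of permutations of `ℤ`
that commute with negation and fix every integer of absolute value greater than `n`.
Such a permutation restricts to a bijection `σ` of `{-n,…,-1,1,…,n}` with
`σ(-k) = -σ(k)`, and every such bijection arises from a unique element. -/
def HOct (n : ℕ) : Subgroup (Equiv.Perm ℤ) where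
  carrier := {σ | (∀ k : ℤ, σ (-k) = -(σ k)) ∧ ∀ k : ℤ, (n : ℤ) < |k| → σ k = k}
  one_mem' := by
    refine ⟨fun k => rfl, fun k _ => rfl⟩
  mul_mem' := by
    rintro σ τ ⟨hσ1, hσ2⟩ ⟨hτ1, hτ2⟩
    refine ⟨fun k => ?_, fun k hk => ?_⟩
    · simp [Equiv.Perm.mul_apply, hτ1, hσ1]
    · simp [Equiv.Perm.mul_apply, hτ2 k hk, hσ2 k hk]
  inv_mem' := by
    rintro σ ⟨h1, h2⟩
    refine ⟨fun k => ?_, fun k hk => ?_⟩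
    · apply σ.injective
      rw [Equiv.Perm.coe_inv, Equiv.apply_symm_apply, h1, Equiv.apply_symm_apply]
    · have h := h2 k hk
      nth_rewrite 1 [← h]
      rw [Equiv.Perm.coe_inv, Equiv.symm_apply_apply]

/-- The descent set `Des(σ) = {1 ≤ i ≤ n-1 : σ(i) > σ(i+1)}`. -/
def DesB (n : ℕ) (σ : Equiv.Perm ℤ) : Finset ℕ :=
  (Finset.Ico 1 n).filter fun i => σ ((i : ℤ) + 1) < σ (i : ℤ)

/-- `d_i(σ) = #{j ∈ Des(σ) : j ≥ i}`. -/
def dB (n : ℕ) (σ : Equiv.Perm ℤ) (i : ℕ) : ℕ :=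
  ((DesB n σ).filter fun j => i ≤ j).card

/-- `ε_i(σ)`: `1` if `σ(i) < 0`, `0` otherwise. -/
def epsB (σ : Equiv.Perm ℤ) (i : ℕ) : ℕ := if σ (i : ℤ) < 0 then 1 else 0

/-- `f_i(σ) = 2 d_i(σ) + ε_i(σ)`. -/
def fB (n : ℕ) (σ : Equiv.Perm ℤ) (i : ℕ) : ℕ := 2 * dB n σ i + epsB σ i

/-- The sign `σ(k)/|σ(k)|` as a rational number. -/
def sgnQ (σ : Equiv.Perm ℤ) (k : ℤ) : ℚ := if σ k < 0 then -1 else 1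

/-- For `i : Fin n` (representing the index `i+1 ∈ {1,…,n}`), the element of `Fin n`
representing `|σ(i+1)| ∈ {1,…,n}`. -/
def sIdx {n : ℕ} (σ : Equiv.Perm ℤ) (i : Fin n) : Fin n :=
  ⟨((σ ((i : ℕ) + 1 : ℤ)).natAbs - 1) % n, Nat.mod_lt _ i.pos⟩

/-- The diagonal action of a signed permutation on `ℚ[x₁,…,xₙ,y₁,…,yₙ]`:
`x_k ↦ (σ(k)/|σ(k)|)·x_{|σ(k)|}` and `y_k ↦ (σ(k)/|σ(k)|)·y_{|σ(k)|}`.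
Here `Sum.inl i` is the variable `x_{i+1}` and `Sum.inr i` is `y_{i+1}`. -/
noncomputable def actXY (n : ℕ) (σ : Equiv.Perm ℤ) :
    MvPolynomial (Fin n ⊕ Fin n) ℚ →ₐ[ℚ] MvPolynomial (Fin n ⊕ Fin n) ℚ :=
  aeval (Sum.elim
    (fun i => C (sgnQ σ ((i : ℕ) + 1 : ℤ)) * X (Sum.inl (sIdx σ i)))
    (fun i => C (sgnQ σ ((i : ℕ) + 1 : ℤ)) * X (Sum.inr (sIdx σ i))))

/-- Action of a signed permutation on the `x`-variables only. -/
noncomputable def actX (n : ℕ) (σ : Equiv.Perm ℤ) :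
    MvPolynomial (Fin n ⊕ Fin n) ℚ →ₐ[ℚ] MvPolynomial (Fin n ⊕ Fin n) ℚ :=
  aeval (Sum.elim
    (fun i => C (sgnQ σ ((i : ℕ) + 1 : ℤ)) * X (Sum.inl (sIdx σ i)))
    (fun i => X (Sum.inr i)))

/-- Action of a signed permutation on the `y`-variables only. -/
noncomputable def actY (n : ℕ) (σ : Equiv.Perm ℤ) :
    MvPolynomial (Fin n ⊕ Fin n) ℚ →ₐ[ℚ] MvPolynomial (Fin n ⊕ Fin n) ℚ :=
  aeval (Sum.elim
    (fun i => X (Sum.inl i))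
    (fun i => C (sgnQ σ ((i : ℕ) + 1 : ℤ)) * X (Sum.inr (sIdx σ i))))

/-- The averaging operator `ρ(f) = (1/|Bₙ|) ∑_{σ ∈ Bₙ} σ·f`. -/
noncomputable def rho (n : ℕ) (f : MvPolynomial (Fin n ⊕ Fin n) ℚ) :
    MvPolynomial (Fin n ⊕ Fin n) ℚ :=
  (Nat.card ↥(HOct n) : ℚ)⁻¹ • ∑ᶠ σ : ↥(HOct n), actXY n (σ : Equiv.Perm ℤ) f

/-- The diagonal signed descent monomial
`c_σ = ∏_{i=1}^n x_i^{f_i(σ⁻¹)} y_i^{f_{|σ⁻¹(i)|}(σ)}`. -/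
noncomputable def cMon (n : ℕ) (σ : Equiv.Perm ℤ) : MvPolynomial (Fin n ⊕ Fin n) ℚ :=
  ∏ i : Fin n,
    (X (Sum.inl i) ^ fB n σ⁻¹ ((i : ℕ) + 1) *
      X (Sum.inr i) ^ fB n σ ((σ⁻¹ ((i : ℕ) + 1 : ℤ)).natAbs))

/-- The monomial `x^p y^q`. -/
noncomputable def monXY (n : ℕ) (p q : Fin n → ℕ) : MvPolynomial (Fin n ⊕ Fin n) ℚ :=
  (∏ i : Fin n, X (Sum.inl i) ^ p i) * ∏ i : Fin n, X (Sum.inr i) ^ q i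

/-- The monomial `x^p y^q` is ordered (belongs to `𝒪ₙ`). -/
def OrderedMon (n : ℕ) (p q : Fin n → ℕ) : Prop :=
  (∀ k, Even (p k + q k)) ∧ Antitone p ∧
  (∀ (i : Fin n) (h : (i : ℕ) + 1 < n),
    p i = p ⟨(i : ℕ) + 1, h⟩ → Even (p i) → q ⟨(i : ℕ) + 1, h⟩ ≤ q i) ∧
  (∀ (i : Fin n) (h : (i : ℕ) + 1 < n),
    p i = p ⟨(i : ℕ) + 1, h⟩ → Odd (p i) → q i ≤ q ⟨(i : ℕ) + 1, h⟩)

/-- `σ` is the signed index permutation of a monomial with `y`-exponent sequence `q`: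
(1) `q_{|σ(1)|} ≥ ⋯ ≥ q_{|σ(n)|}`; (2) ties `q_{|σ(i)|} = q_{|σ(j)|}` (`i < j`) force
`σ(i) < σ(i+1) < ⋯ < σ(j)`; (3) `q_{|σ(i)|}` is even iff `σ(i) > 0`. -/
def IsSignedIndexPerm (n : ℕ) (q : Fin n → ℕ) (σ : Equiv.Perm ℤ) : Prop :=
  σ ∈ HOct n ∧
  Antitone (fun i : Fin n => q (sIdx σ i)) ∧
  (∀ i j : Fin n, i < j → q (sIdx σ i) = q (sIdx σ j) →
    ∀ k l : Fin n, i ≤ k → k < l → l ≤ j →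
      σ ((k : ℕ) + 1 : ℤ) < σ ((l : ℕ) + 1 : ℤ)) ∧
  (∀ i : Fin n, Even (q (sIdx σ i)) ↔ 0 < σ ((i : ℕ) + 1 : ℤ))

/-- `𝔰(q) = q` if `q` is even, `-q` if `q` is odd. -/
def sFun (q : ℕ) : ℤ := if Even q then (q : ℤ) else -(q : ℤ)

/-- The decreasing rearrangement `𝔬(q)` of a sequence `q`. -/
def oArr {n : ℕ} (q : Fin n → ℕ) : Fin n → ℕ := fun i => q (Tuple.sort q i.rev)

/-- Strict lexicographic comparison of sequences. -/
def LexLT {n : ℕ} {α : Type*} [LT α] (a b : Fin n → α) : Prop :=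
  ∃ i, (∀ j, j < i → a j = b j) ∧ a i < b i

/-- The monomial `x^{p'} y^{q'}` strictly precedes `x^p y^q` in the total order `≼` on
ordered monomials: either `𝔬(x^{p'}y^{q'}) <_ℓ 𝔬(x^p y^q)` lexicographically, or the
`𝔬`-data agree and `(p', 𝔰(q')) <_ℓ (p, 𝔰(q))` lexicographically. -/
def MonPrec {n : ℕ} (p' q' p q : Fin n → ℕ) : Prop :=
  LexLT (oArr p') (oArr p) ∨
  (oArr p' = oArr p ∧ LexLT (oArr q') (oArr q)) ∨
  (oArr p' = oArr p ∧ oArr q' = oArr q ∧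
    (LexLT p' p ∨ (p' = p ∧ LexLT (fun i => sFun (q' i)) (fun i => sFun (q i)))))

/-- The monomial symmetric polynomial `m_{2ν}(x) = ∑_{[α] ∈ Σₙ/Σₙ(ν)} x^{2α(ν)}`,
i.e. the sum of all distinct monomials `x^{2w}` with `w` a rearrangement of `ν`. -/
noncomputable def mSymX (n : ℕ) (ν : Fin n → ℕ) : MvPolynomial (Fin n ⊕ Fin n) ℚ :=
  ∑ w ∈ Finset.image (fun α : Equiv.Perm (Fin n) => ν ∘ α) Finset.univ,
    ∏ i : Fin n, X (Sum.inl i) ^ (2 * w i)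

/-- The monomial symmetric polynomial `m_{2μ}(y)`. -/
noncomputable def mSymY (n : ℕ) (μ : Fin n → ℕ) : MvPolynomial (Fin n ⊕ Fin n) ℚ :=
  ∑ w ∈ Finset.image (fun α : Equiv.Perm (Fin n) => μ ∘ α) Finset.univ,
    ∏ i : Fin n, X (Sum.inr i) ^ (2 * w i)

/-- The action of a signed permutation on `ℚ[x₁,…,xₙ]`:
`x_k ↦ (σ(k)/|σ(k)|)·x_{|σ(k)|}`. Here the variable `i : Fin n` is `x_{i+1}`. -/
noncomputable def actB (n : ℕ) (σ : Equiv.Perm ℤ) :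
    MvPolynomial (Fin n) ℚ →ₐ[ℚ] MvPolynomial (Fin n) ℚ :=
  aeval fun i => C (sgnQ σ ((i : ℕ) + 1 : ℤ)) * X (sIdx σ i)

/-- The signed descent monomial `b_σ = ∏_{i=1}^n x_i^{f_{|σ⁻¹(i)|}(σ)}`. -/
noncomputable def bMon (n : ℕ) (σ : Equiv.Perm ℤ) : MvPolynomial (Fin n) ℚ :=
  ∏ i : Fin n, X i ^ fB n σ ((σ⁻¹ ((i : ℕ) + 1 : ℤ)).natAbs)

section AuxLemmas

variable {n : ℕ} {σ : Equiv.Perm ℤ}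

lemma hoct_zero (h : σ ∈ HOct n) : σ 0 = 0 := by
  have h0 := h.1 0
  rw [neg_zero] at h0
  linarith

lemma hoct_natAbs (h : σ ∈ HOct n) {k : ℤ} (hk1 : 1 ≤ k) (hk2 : k ≤ (n : ℤ)) :
    1 ≤ (σ k).natAbs ∧ (σ k).natAbs ≤ n := by
  constructor
  · rcases Nat.eq_zero_or_pos (σ k).natAbs with h0 | h1
    · exfalso
      have hz : σ k = 0 := Int.natAbs_eq_zero.mp h0
      have h00 : σ 0 = 0 := hoct_zero h
      have := σ.injective (hz.trans h00.symm)
      omega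
    · exact h1
  · by_contra hlt
    push_neg at hlt
    have hinv : σ⁻¹ ∈ HOct n := (HOct n).inv_mem h
    have habs : (n : ℤ) < |σ k| := by
      rw [Int.abs_eq_natAbs]; exact_mod_cast hlt
    have hx := hinv.2 (σ k) habs
    rw [Equiv.Perm.coe_inv, Equiv.symm_apply_apply] at hx
    rw [← hx, abs_of_nonneg (by linarith)] at habs
    linarith

lemma key_j (h : σ ∈ HOct n) (i : Fin n) :
    ∃ j : Fin n, sIdx σ j = i ∧ ((j : ℕ) : ℤ) + 1 = |σ⁻¹ (((i : ℕ) : ℤ) + 1)| ∧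
      σ (((j : ℕ) : ℤ) + 1) =
        (if 0 < σ⁻¹ (((i : ℕ) : ℤ) + 1) then (((i : ℕ) : ℤ) + 1) else -(((i : ℕ) : ℤ) + 1)) := by
  have hinv : σ⁻¹ ∈ HOct n := (HOct n).inv_mem h
  have hi := i.2
  have hb := hoct_natAbs hinv (k := ((i : ℕ) : ℤ) + 1) (by omega) (by omega)
  set a := σ⁻¹ (((i : ℕ) : ℤ) + 1) with ha
  refine ⟨⟨a.natAbs - 1, by omega⟩, ?_, ?_, ?_⟩
  · have hsa : σ (((a.natAbs - 1 : ℕ) : ℤ) + 1) =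
        (if 0 < a then (((i : ℕ) : ℤ) + 1) else -(((i : ℕ) : ℤ) + 1)) := by
      have hcast : ((a.natAbs - 1 : ℕ) : ℤ) + 1 = |a| := by
        rw [Int.abs_eq_natAbs]; omega
      rw [hcast]
      by_cases hpos : 0 < a
      · rw [if_pos hpos, abs_of_pos hpos, ha, Equiv.Perm.coe_inv, Equiv.apply_symm_apply]
      · have hneg : a < 0 := by omega
        rw [if_neg hpos, abs_of_neg hneg, h.1, ha, Equiv.Perm.coe_inv, Equiv.apply_symm_apply]
    apply Fin.ext
    simp only [sIdx]
    rw [hsa]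
    by_cases hpos : 0 < a
    · rw [if_pos hpos]
      have : (((i : ℕ) : ℤ) + 1).natAbs = (i : ℕ) + 1 := by omega
      rw [this]
      simp [Nat.mod_eq_of_lt hi]
    · rw [if_neg hpos]
      have : (-(((i : ℕ) : ℤ) + 1)).natAbs = (i : ℕ) + 1 := by
        rw [Int.natAbs_neg]; omega
      rw [this]
      simp [Nat.mod_eq_of_lt hi]
  · show ((a.natAbs - 1 : ℕ) : ℤ) + 1 = |a|
    rw [Int.abs_eq_natAbs]
    omega
  · have hcast : ((a.natAbs - 1 : ℕ) : ℤ) + 1 = |a| := by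
      rw [Int.abs_eq_natAbs]; omega
    rw [hcast]
    by_cases hpos : 0 < a
    · rw [if_pos hpos, abs_of_pos hpos, ha, Equiv.Perm.coe_inv, Equiv.apply_symm_apply]
    · have hneg : a < 0 := by omega
      rw [if_neg hpos, abs_of_neg hneg, h.1, ha, Equiv.Perm.coe_inv, Equiv.apply_symm_apply]

lemma eps_parity {q : Fin n → ℕ} (hσ : IsSignedIndexPerm n q σ) (i : Fin n) :
    Even (q i) ↔ 0 < σ⁻¹ (((i : ℕ) : ℤ) + 1) := by
  obtain ⟨j, hj1, hj2, hj3⟩ := key_j hσ.1 i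
  have h4 := hσ.2.2.2 j
  rw [hj1] at h4
  by_cases hpos : 0 < σ⁻¹ (((i : ℕ) : ℤ) + 1)
  · rw [if_pos hpos] at hj3
    rw [hj3] at h4
    exact ⟨fun _ => hpos, fun _ => h4.mpr (by omega)⟩
  · rw [if_neg hpos] at hj3
    rw [hj3] at h4
    constructor
    · intro he
      have := h4.mp he
      omega
    · intro hp
      exact absurd hp hpos

end AuxLemmas
section AuxLemmas2

variable {n : ℕ} {σ : Equiv.Perm ℤ}

lemma hoct_inv_ne_zero (h : σ ∈ HOct n) (i : Fin n) : σ⁻¹ (((i : ℕ) : ℤ) + 1) ≠ 0 := by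
  intro h0
  have hz : σ⁻¹ 0 = 0 := hoct_zero ((HOct n).inv_mem h)
  have := (σ⁻¹).injective (h0.trans hz.symm)
  omega

/-- Lemma A: if `p i = p (i+1)` for an ordered monomial, then `i+1` is not a descent
of `σ⁻¹`, i.e. `σ⁻¹(i+1) < σ⁻¹(i+2)`. -/
lemma lemA {p q : Fin n → ℕ} (hO : OrderedMon n p q) (hσ : IsSignedIndexPerm n q σ)
    (i : Fin n) (h : (i : ℕ) + 1 < n) (hp : p i = p ⟨(i : ℕ) + 1, h⟩) :
    σ⁻¹ (((i : ℕ) : ℤ) + 1) < σ⁻¹ (((i : ℕ) : ℤ) + 2) := by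
  set i' : Fin n := ⟨(i : ℕ) + 1, h⟩ with hi'
  obtain ⟨j, hj1, hj2, hj3⟩ := key_j hσ.1 i
  obtain ⟨k, hk1, hk2, hk3⟩ := key_j hσ.1 i'
  have hco : (((i' : ℕ) : ℤ)) + 1 = ((i : ℕ) : ℤ) + 2 := by
    rw [hi']; push_cast; ring
  rw [hco] at hk2 hk3
  set a := σ⁻¹ (((i : ℕ) : ℤ) + 1) with ha
  set b := σ⁻¹ (((i : ℕ) : ℤ) + 2) with hb
  have hane : a ≠ 0 := hoct_inv_ne_zero hσ.1 i
  have hbne : b ≠ 0 := by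
    have := hoct_inv_ne_zero hσ.1 i'
    rwa [hco] at this
  have hab : a ≠ b := by
    intro he
    have h2 := (σ⁻¹).injective
      (show σ⁻¹ (((i : ℕ) : ℤ) + 1) = σ⁻¹ (((i : ℕ) : ℤ) + 2) by rw [← ha, ← hb]; exact he)
    omega
  have hpar1 : (Even (q i) ↔ 0 < a) := eps_parity hσ i
  have hpar2 : (Even (q i') ↔ 0 < b) := by
    have := eps_parity hσ i'
    rwa [hco] at this
  have hpq1 : (Even (p i) ↔ Even (q i)) := Nat.even_add.mp (hO.1 i)
  have hpq2 : (Even (p i') ↔ Even (q i')) := Nat.even_add.mp (hO.1 i')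
  by_cases hev : Even (p i)
  · -- even case: a, b > 0, q i ≥ q i'
    have hqa : 0 < a := hpar1.mp (hpq1.mp hev)
    have hqb : 0 < b := hpar2.mp (hpq2.mp (hp ▸ hev))
    have hq : q i' ≤ q i := hO.2.2.1 i h hp hev
    rw [if_pos hqa] at hj3
    rw [if_pos hqb] at hk3
    rw [abs_of_pos hqa] at hj2
    rw [abs_of_pos hqb] at hk2
    have hjk : (j : ℕ) < (k : ℕ) := by
      rcases lt_trichotomy ((j : ℕ)) ((k : ℕ)) with h1 | h1 | h1
      · exact h1
      · exfalso; apply hab; omega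
      · exfalso
        have hkj : k < j := Fin.lt_def.mpr h1
        have hle := hσ.2.1 (le_of_lt hkj)
        simp only [hj1, hk1] at hle
        have heq : q (sIdx σ k) = q (sIdx σ j) := by
          rw [hj1, hk1]; omega
        have := hσ.2.2.1 k j hkj heq k j le_rfl hkj le_rfl
        rw [hj3, hk3] at this
        omega
    omega
  · -- odd case: a, b < 0, q i ≤ q i'
    have hqa : a < 0 := by
      have : ¬ (0 < a) := fun hc => hev (hpq1.mpr (hpar1.mpr hc))
      omega
    have hqb : b < 0 := by
      have hev' : ¬ Even (p i') := by rwa [← hp]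
      have : ¬ (0 < b) := fun hc => hev' (hpq2.mpr (hpar2.mpr hc))
      omega
    have hq : q i ≤ q i' := hO.2.2.2 i h hp (Nat.not_even_iff_odd.mp hev)
    rw [if_neg (by omega : ¬ (0 < a))] at hj3
    rw [if_neg (by omega : ¬ (0 < b))] at hk3
    rw [abs_of_neg hqa] at hj2
    rw [abs_of_neg hqb] at hk2
    have hjk : (k : ℕ) < (j : ℕ) := by
      rcases lt_trichotomy ((k : ℕ)) ((j : ℕ)) with h1 | h1 | h1
      · exact h1
      · exfalso; apply hab; omega
      · exfalso
        have hkj : j < k := Fin.lt_def.mpr h1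
        have hle := hσ.2.1 (le_of_lt hkj)
        simp only [hj1, hk1] at hle
        have heq : q (sIdx σ j) = q (sIdx σ k) := by
          rw [hj1, hk1]; omega
        have := hσ.2.2.1 j k hkj heq j k le_rfl hkj le_rfl
        rw [hj3, hk3] at this
        omega
    omega

lemma dB_succ (τ : Equiv.Perm ℤ) {m : ℕ} (hm : 1 ≤ m) (hm2 : m < n) :
    dB n τ m = dB n τ (m + 1) + (if τ ((m : ℤ) + 1) < τ (m : ℤ) then 1 else 0) := by
  unfold dB
  have hs : ((DesB n τ).filter fun j => m ≤ j) =
      ((DesB n τ).filter fun j => m + 1 ≤ j) ∪ ((DesB n τ).filter fun j => j = m) := by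
    ext x
    simp only [Finset.mem_filter, Finset.mem_union]
    constructor
    · rintro ⟨hx, hle⟩
      rcases eq_or_lt_of_le hle with he | hlt
      · exact Or.inr ⟨hx, he.symm⟩
      · exact Or.inl ⟨hx, hlt⟩
    · rintro (⟨hx, hle⟩ | ⟨hx, he⟩) <;> exact ⟨hx, by omega⟩
  have hmem : m ∈ DesB n τ ↔ τ ((m : ℤ) + 1) < τ (m : ℤ) := by
    simp [DesB, Finset.mem_filter, Finset.mem_Ico, hm, hm2]
  rw [hs, Finset.card_union_of_disjoint]
  · congr 1
    rw [Finset.filter_eq']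
    by_cases hd : τ ((m : ℤ) + 1) < τ (m : ℤ)
    · rw [if_pos (hmem.mpr hd), if_pos hd]
      simp
    · rw [if_neg (fun hc => hd (hmem.mp hc)), if_neg hd]
      simp
  · rw [Finset.disjoint_left]
    rintro x hx1 hx2
    simp only [Finset.mem_filter] at hx1 hx2
    omega

lemma dB_top (τ : Equiv.Perm ℤ) : dB n τ n = 0 := by
  unfold dB
  rw [Finset.card_eq_zero, Finset.filter_eq_empty_iff]
  intro x hx
  simp only [DesB, Finset.mem_filter, Finset.mem_Ico] at hx
  omega

end AuxLemmas2
/-- For an ordered monomial `x^p y^q ∈ 𝒪ₙ` with signed index permutation `σ`, the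
sequence `(p_i - f_i(σ⁻¹))_{i=1}^n` is a weakly decreasing sequence of non-negative
even integers. -/
theorem p_sub_f_decreasing (n : ℕ) (hn : 1 ≤ n) (p q : Fin n → ℕ)
    (hO : OrderedMon n p q) (σ : Equiv.Perm ℤ) (hσ : IsSignedIndexPerm n q σ) :
    (∀ i : Fin n, 0 ≤ (p i : ℤ) - (fB n σ⁻¹ ((i : ℕ) + 1) : ℤ)) ∧
    (∀ i : Fin n, Even ((p i : ℤ) - (fB n σ⁻¹ ((i : ℕ) + 1) : ℤ))) ∧
    Antitone (fun i : Fin n => (p i : ℤ) - (fB n σ⁻¹ ((i : ℕ) + 1) : ℤ)) := by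
  have hTeven : ∀ i : Fin n, Even ((p i : ℤ) - (fB n σ⁻¹ ((i : ℕ) + 1) : ℤ)) := by
    intro i
    have hc1 : (((i : ℕ) + 1 : ℕ) : ℤ) = ((i : ℕ) : ℤ) + 1 := by push_cast; ring
    have hpar := eps_parity hσ i
    have hpq : Even (p i) ↔ Even (q i) := Nat.even_add.mp (hO.1 i)
    have hne := hoct_inv_ne_zero hσ.1 i
    have heq : epsB σ⁻¹ ((i : ℕ) + 1) =
        if 0 < σ⁻¹ (((i : ℕ) : ℤ) + 1) then 0 else 1 := by
      unfold epsB
      rw [hc1]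
      by_cases hpos : 0 < σ⁻¹ (((i : ℕ) : ℤ) + 1)
      · rw [if_pos hpos, if_neg (by omega)]
      · rw [if_neg hpos, if_pos (by omega)]
    unfold fB
    rw [heq]
    by_cases hpos : 0 < σ⁻¹ (((i : ℕ) : ℤ) + 1)
    · rw [if_pos hpos]
      obtain ⟨c, hc⟩ := hpq.mpr (hpar.mpr hpos)
      exact ⟨(c : ℤ) - (dB n σ⁻¹ ((i : ℕ) + 1) : ℤ), by push_cast [hc]; ring⟩
    · rw [if_neg hpos]
      have hqodd : ¬ Even (q i) := fun he => hpos (hpar.mp he)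
      obtain ⟨c, hc⟩ := Nat.not_even_iff_odd.mp (fun he => hqodd (hpq.mp he))
      exact ⟨(c : ℤ) - (dB n σ⁻¹ ((i : ℕ) + 1) : ℤ), by push_cast [hc]; ring⟩
  have hstep : ∀ (i : Fin n) (h : (i : ℕ) + 1 < n),
      (p ⟨(i : ℕ) + 1, h⟩ : ℤ) - (fB n σ⁻¹ (((i : ℕ) + 1) + 1) : ℤ) ≤
      (p i : ℤ) - (fB n σ⁻¹ ((i : ℕ) + 1) : ℤ) := by
    intro i h
    set i' : Fin n := ⟨(i : ℕ) + 1, h⟩ with hi'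
    have hc1 : (((i : ℕ) + 1 : ℕ) : ℤ) = ((i : ℕ) : ℤ) + 1 := by push_cast; ring
    have hc2 : (((i : ℕ) + 1 : ℕ) : ℤ) + 1 = ((i : ℕ) : ℤ) + 2 := by push_cast; ring
    have hc3 : (((i : ℕ) + 1 + 1 : ℕ) : ℤ) = ((i : ℕ) : ℤ) + 2 := by push_cast; ring
    set a := σ⁻¹ (((i : ℕ) : ℤ) + 1) with ha
    set b := σ⁻¹ (((i : ℕ) : ℤ) + 2) with hb
    have hd := dB_succ (n := n) σ⁻¹ (show 1 ≤ (i : ℕ) + 1 by omega) h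
    rw [hc2, hc1] at hd
    have hfB1 : fB n σ⁻¹ ((i : ℕ) + 1) =
        2 * (dB n σ⁻¹ ((i : ℕ) + 1 + 1) + (if b < a then 1 else 0)) +
          (if a < 0 then 1 else 0) := by
      unfold fB epsB
      rw [hd, hc1]
    have hfB2 : fB n σ⁻¹ ((i : ℕ) + 1 + 1) =
        2 * dB n σ⁻¹ ((i : ℕ) + 1 + 1) + (if b < 0 then 1 else 0) := by
      unfold fB epsB
      rw [hc3]
    have hmono : p i' ≤ p i := hO.2.1 (show i ≤ i' from Fin.le_def.mpr (by simp [hi']))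
    have hu := hTeven i
    have hv := hTeven i'
    have hv' : Even ((p i' : ℤ) - (fB n σ⁻¹ ((i : ℕ) + 1 + 1) : ℤ)) := hv
    obtain ⟨u, hu⟩ := hu
    obtain ⟨v, hv⟩ := hv'
    rw [hfB1] at hu ⊢
    rw [hfB2] at hv ⊢
    have hAor : a < b ∨ p i ≠ p i' := by
      by_cases hpp : p i = p i'
      · exact Or.inl (lemA hO hσ i h hpp)
      · exact Or.inr hpp
    rcases hAor with hlt | hne
    · split_ifs at hu hv ⊢ <;> omega
    · split_ifs at hu hv ⊢ <;> omega
  set T : Fin n → ℤ := fun i => (p i : ℤ) - (fB n σ⁻¹ ((i : ℕ) + 1) : ℤ) with hT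
  have hanti : Antitone T := by
    have hF : Antitone (fun k : ℕ =>
        if h : k < n then T ⟨k, h⟩ else T ⟨n - 1, by omega⟩) := by
      apply antitone_nat_of_succ_le
      intro k
      by_cases h1 : k + 1 < n
      · have h0 : k < n := by omega
        rw [dif_pos h1, dif_pos h0]
        exact hstep ⟨k, h0⟩ h1
      · by_cases h0 : k < n
        · have hk : k = n - 1 := by omega
          rw [dif_neg h1, dif_pos h0]
          apply le_of_eq
          congr 1
          exact Fin.ext (by simp [hk])
        · rw [dif_neg h1, dif_neg h0]
    intro k l hkl
    have hkl' : (k : ℕ) ≤ (l : ℕ) := hkl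
    have := hF hkl'
    beta_reduce at this
    rwa [dif_pos k.2, dif_pos l.2, Fin.eta, Fin.eta] at this
  have hlast : 0 ≤ T ⟨n - 1, by omega⟩ := by
    set lst : Fin n := ⟨n - 1, by omega⟩ with hlst
    have hn1 : (n - 1) + 1 = n := by omega
    have hvl : (lst : ℕ) = n - 1 := rfl
    show (0 : ℤ) ≤ (p lst : ℤ) - (fB n σ⁻¹ ((lst : ℕ) + 1) : ℤ)
    rw [hvl, hn1]
    have hfb : fB n σ⁻¹ n = epsB σ⁻¹ n := by
      unfold fB
      rw [dB_top]
      simp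
    rw [hfb]
    have hcast : (((lst : ℕ) : ℤ)) + 1 = (n : ℤ) := by rw [hvl]; omega
    have hpar := eps_parity hσ lst
    rw [hcast] at hpar
    unfold epsB
    by_cases hx : σ⁻¹ ((n : ℕ) : ℤ) < 0
    · have hqodd : ¬ Even (q lst) := fun he => by have := hpar.mp he; omega
      have hpq : Even (p lst) ↔ Even (q lst) := Nat.even_add.mp (hO.1 lst)
      have hp1 : 1 ≤ p lst := by
        rcases Nat.eq_zero_or_pos (p lst) with h0 | h0
        · exact absurd (hpq.mp (by simp [h0])) hqodd
        · exact h0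
      rw [if_pos hx]
      push_cast
      omega
    · rw [if_neg hx]
      push_cast
      omega
  refine ⟨fun i => ?_, hTeven, hanti⟩
  have hle : i ≤ (⟨n - 1, by omega⟩ : Fin n) := Fin.le_def.mpr (by have := i.2; simp; omega)
  exact le_trans hlast (hanti hle)
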